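/- If Φ and Ψ are two orthonormal bases of ℝ^N (or ℂ^N) with coherence μ = max_{ℓ,r} |⟨φ_ℓ, ψ_r⟩|, and a nonzero vector x has representations x = Σ a_ℓ φ_ℓ = Σ b_ℓ ψ_ℓ with A = ‖a‖₀ and B = ‖b‖₀ nonzero coefficients respectively, then √(A·B) ≥ 1/μ. -/

import Mathlib

open scoped BigOperators

lemma aux_sum {n : ℕ} (f g : Fin n → ℝ) (c : ℝ) :
    ∑ ℓ : Fin n, ∑ r : Fin n, f ℓ * g r * c
      = (∑ ℓ : Fin n, f ℓ) * (∑ r : Fin n, g r) * c := by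
  simp only [Finset.sum_mul, Finset.mul_sum]
  exact Finset.sum_comm

/-- Discrete uncertainty principle: if a nonzero vector has `A` nonzero coefficients
in an orthonormal basis `φ` and `B` nonzero coefficients in an orthonormal basis `ψ`,
then `√(A·B) ≥ 1/μ` where `μ` is the coherence. -/
theorem stmt0 {N : ℕ} (hN : 0 < N)
    (φ ψ : OrthonormalBasis (Fin N) ℂ (EuclideanSpace ℂ (Fin N)))
    (μ : ℝ)
    (hμ : μ = ⨆ ℓ : Fin N, ⨆ r : Fin N, ‖(inner ℂ (φ ℓ) (ψ r) : ℂ)‖)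
    (x : EuclideanSpace ℂ (Fin N)) (hx : x ≠ 0)
    (A B : ℕ)
    (hA : A = (Finset.univ.filter fun ℓ : Fin N => φ.repr x ℓ ≠ 0).card)
    (hB : B = (Finset.univ.filter fun ℓ : Fin N => ψ.repr x ℓ ≠ 0).card) :
    Real.sqrt ((A : ℝ) * B) ≥ 1 / μ := by
  have : Nonempty (Fin N) := ⟨⟨0, hN⟩⟩
  rcases le_or_gt μ 0 with hμ0 | hμ0
  · exact le_trans (one_div_nonpos.mpr hμ0) (Real.sqrt_nonneg _)
  rw [ge_iff_le, div_le_iff₀ hμ0]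
  have hxn : (0:ℝ) < ‖x‖ := norm_pos_iff.mpr hx
  have hx2 : (0:ℝ) < ‖x‖^2 := by positivity
  -- coherence bound
  have hcoh : ∀ ℓ r : Fin N, ‖(inner ℂ (φ ℓ) (ψ r) : ℂ)‖ ≤ μ := by
    intro ℓ r
    rw [hμ]
    refine le_trans (le_ciSup (f := fun r => ‖(inner ℂ (φ ℓ) (ψ r) : ℂ)‖)
      (Set.Finite.bddAbove (Set.finite_range _)) r) ?_
    exact le_ciSup (f := fun ℓ => ⨆ r : Fin N, ‖(inner ℂ (φ ℓ) (ψ r) : ℂ)‖)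
      (Set.Finite.bddAbove (Set.finite_range _)) ℓ
  -- expansion of ⟪x,x⟫
  have hexp : (inner ℂ x x : ℂ) =
      ∑ ℓ : Fin N, ∑ r : Fin N,
        (starRingEnd ℂ) (φ.repr x ℓ) * ψ.repr x r * (inner ℂ (φ ℓ) (ψ r) : ℂ) := by
    calc (inner ℂ x x : ℂ)
        = (inner ℂ (∑ ℓ : Fin N, φ.repr x ℓ • φ ℓ) (∑ r : Fin N, ψ.repr x r • ψ r) : ℂ) := by
          rw [φ.sum_repr x, ψ.sum_repr x]
      _ = ∑ ℓ : Fin N, ∑ r : Fin N,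
            (starRingEnd ℂ) (φ.repr x ℓ) * ψ.repr x r * (inner ℂ (φ ℓ) (ψ r) : ℂ) := by
          rw [sum_inner]
          refine Finset.sum_congr rfl fun ℓ _ => ?_
          rw [inner_smul_left, inner_sum, Finset.mul_sum]
          refine Finset.sum_congr rfl fun r _ => ?_
          rw [inner_smul_right]; ring
  -- Parseval
  have hpars : ∀ (θ : OrthonormalBasis (Fin N) ℂ (EuclideanSpace ℂ (Fin N))),
      ∑ ℓ : Fin N, ‖θ.repr x ℓ‖^2 = ‖x‖^2 := by
    intro θ
    have h1 : ‖θ.repr x‖ = ‖x‖ := θ.repr.norm_map x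
    have h2 : ‖θ.repr x‖^2 = ∑ ℓ : Fin N, ‖θ.repr x ℓ‖^2 :=
      PiLp.norm_sq_eq_of_L2 _ (θ.repr x)
    rw [← h2, h1]
  -- ℓ¹ bounds via Cauchy–Schwarz
  have hl1 : ∀ (θ : OrthonormalBasis (Fin N) ℂ (EuclideanSpace ℂ (Fin N))) (C : ℕ),
      C = (Finset.univ.filter fun ℓ : Fin N => θ.repr x ℓ ≠ 0).card →
      ∑ ℓ : Fin N, ‖θ.repr x ℓ‖ ≤ Real.sqrt C * ‖x‖ := by
    intro θ C hC
    set s := Finset.univ.filter fun ℓ : Fin N => θ.repr x ℓ ≠ 0 with hs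
    have hsum : ∑ ℓ : Fin N, ‖θ.repr x ℓ‖ = ∑ ℓ ∈ s, ‖θ.repr x ℓ‖ := by
      refine (Finset.sum_subset (Finset.filter_subset _ _) ?_).symm
      intro ℓ _ hℓ
      simp only [hs, Finset.mem_filter, Finset.mem_univ, true_and, not_not] at hℓ
      simp [hℓ]
    have hcs : (∑ ℓ ∈ s, ‖θ.repr x ℓ‖)^2 ≤ s.card * ∑ ℓ ∈ s, ‖θ.repr x ℓ‖^2 :=
      sq_sum_le_card_mul_sum_sq
    have hle : ∑ ℓ ∈ s, ‖θ.repr x ℓ‖^2 ≤ ‖x‖^2 := by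
      rw [← hpars θ]
      exact Finset.sum_le_sum_of_subset_of_nonneg (Finset.subset_univ _)
        (fun i _ _ => by positivity)
    have h1 : (∑ ℓ ∈ s, ‖θ.repr x ℓ‖)^2 ≤ (C : ℝ) * ‖x‖^2 := by
      calc (∑ ℓ ∈ s, ‖θ.repr x ℓ‖)^2 ≤ (s.card : ℝ) * ∑ ℓ ∈ s, ‖θ.repr x ℓ‖^2 := hcs
        _ ≤ (C : ℝ) * ‖x‖^2 := by
            rw [hC]
            exact mul_le_mul_of_nonneg_left hle (by positivity)
    rw [hsum]
    have h2 := Real.sqrt_le_sqrt h1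
    rwa [Real.sqrt_sq (by positivity), Real.sqrt_mul (by positivity),
      Real.sqrt_sq hxn.le] at h2
  -- main chain
  have hmain : ‖x‖^2 ≤ μ * (Real.sqrt A * ‖x‖) * (Real.sqrt B * ‖x‖) := by
    have h0 : ‖x‖^2 = ‖(inner ℂ x x : ℂ)‖ := by
      rw [@inner_self_eq_norm_sq_to_K ℂ]; simp
    rw [h0, hexp]
    calc ‖∑ ℓ : Fin N, ∑ r : Fin N,
          (starRingEnd ℂ) (φ.repr x ℓ) * ψ.repr x r * (inner ℂ (φ ℓ) (ψ r) : ℂ)‖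
        ≤ ∑ ℓ : Fin N, ∑ r : Fin N, ‖φ.repr x ℓ‖ * ‖ψ.repr x r‖ * μ := by
          refine le_trans (norm_sum_le _ _) (Finset.sum_le_sum fun ℓ _ => ?_)
          refine le_trans (norm_sum_le _ _) (Finset.sum_le_sum fun r _ => ?_)
          rw [norm_mul, norm_mul, RCLike.norm_conj]
          exact mul_le_mul_of_nonneg_left (hcoh ℓ r) (by positivity)
      _ = (∑ ℓ : Fin N, ‖φ.repr x ℓ‖) * (∑ r : Fin N, ‖ψ.repr x r‖) * μ :=
          aux_sum (fun ℓ => ‖φ.repr x ℓ‖) (fun r => ‖ψ.repr x r‖) μ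
      _ ≤ (Real.sqrt A * ‖x‖) * (Real.sqrt B * ‖x‖) * μ := by
          have ha := hl1 φ A hA
          have hb := hl1 ψ B hB
          have h1 : (0:ℝ) ≤ ∑ ℓ : Fin N, ‖φ.repr x ℓ‖ :=
            Finset.sum_nonneg fun i _ => norm_nonneg _
          have h2 : (0:ℝ) ≤ ∑ r : Fin N, ‖ψ.repr x r‖ :=
            Finset.sum_nonneg fun i _ => norm_nonneg _
          have := mul_le_mul ha hb h2 (by positivity)
          exact mul_le_mul_of_nonneg_right this hμ0.le
      _ = μ * (Real.sqrt A * ‖x‖) * (Real.sqrt B * ‖x‖) := by ring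
  have hfinal : 1 ≤ μ * (Real.sqrt A * Real.sqrt B) := by
    have h := hmain
    have hrr : μ * (Real.sqrt A * ‖x‖) * (Real.sqrt B * ‖x‖)
        = μ * (Real.sqrt A * Real.sqrt B) * ‖x‖^2 := by ring
    rw [hrr] at h
    nlinarith [hx2]
  calc 1 ≤ μ * (Real.sqrt A * Real.sqrt B) := hfinal
    _ = Real.sqrt ((A:ℝ) * B) * μ := by
        rw [Real.sqrt_mul (by positivity)]; ring
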